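/- Let p < 0, m₁, m₂ > 0, and define α(x) = m₁/(1 + exp(-m₂·x)). Let 0 < β* ≤ m₃ with m₃/m₁ < 1/2, set C* = β*·I(t₀)^(-p), and let S, I : [t₀, ∞) → ℝ be differentiable functions with 0 < S(t) and 0 < I(t) ≤ 1 for all t ≥ t₀, satisfying S' = -α(I)·I·S and I' = α(I)·I·S - C*·I^(p+1) on [t₀, ∞). Then there exists τ ≥ t₀ such that I(t) ≤ (C*/(2·m₁))·I(t)^(p+1) for all t > τ (equivalently, I(t)^(-p) ≤ C*/(2·m₁) for all t > τ). -/

import Mathlib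

open Topology Filter


/-- Lemma 3.4 (boundedness of I after the transition time, case p < 0):
with C* = β*·I(t₀)^(-p), 0 < β* ≤ m₃ and m₃/m₁ < 1/2, there exists τ ≥ t₀ such that
I(t) ≤ (C*/(2·m₁))·I(t)^(p+1) for all t > τ. -/
theorem boundedness_after_transition (p m₁ m₂ m₃ βstar t₀ : ℝ)
    (hp : p < 0) (hm1 : 0 < m₁) (hm2 : 0 < m₂)
    (hβpos : 0 < βstar) (hβle : βstar ≤ m₃) (hratio : m₃ / m₁ < 1 / 2)
    (α : ℝ → ℝ) (hα : ∀ x, α x = m₁ / (1 + Real.exp (-m₂ * x)))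
    (S I : ℝ → ℝ) (Cstar : ℝ) (hCstar : Cstar = βstar * I t₀ ^ (-p))
    (hSpos : ∀ t ≥ t₀, 0 < S t)
    (hIpos : ∀ t ≥ t₀, 0 < I t ∧ I t ≤ 1)
    (hS : ∀ t ≥ t₀, HasDerivAt S (-(α (I t)) * I t * S t) t)
    (hI : ∀ t ≥ t₀, HasDerivAt I (α (I t) * I t * S t - Cstar * I t ^ (p + 1)) t) :
    ∃ τ ≥ t₀, ∀ t > τ, I t ≤ Cstar / (2 * m₁) * I t ^ (p + 1) := by
  have hIt₀ := hIpos t₀ le_rfl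
  have hCpos : 0 < Cstar := by
    rw [hCstar]; exact mul_pos hβpos (Real.rpow_pos_of_pos hIt₀.1 _)
  -- bounds for α
  have hαpos : ∀ x, 0 < α x := by
    intro x; rw [hα]
    have := Real.exp_pos (-m₂ * x)
    positivity
  have hαle : ∀ x, α x ≤ m₁ := by
    intro x; rw [hα]
    have h1 := (Real.exp_pos (-m₂ * x)).le
    rw [div_le_iff₀ (by linarith)]
    nlinarith
  set M : ℝ := max (S t₀) 1 with hM
  have hM1 : (1 : ℝ) ≤ M := le_max_right _ _
  have hMpos : (0 : ℝ) < M := lt_of_lt_of_le one_pos hM1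
  have hbase : 0 < 2 * m₁ * M / Cstar := by positivity
  set ℓ : ℝ := (2 * m₁ * M / Cstar) ^ (1 / p) with hℓdef
  have hℓpos : 0 < ℓ := Real.rpow_pos_of_pos hbase _
  have hℓp : ℓ ^ p = 2 * m₁ * M / Cstar := by
    rw [hℓdef, ← Real.rpow_mul hbase.le, one_div, inv_mul_cancel₀ hp.ne, Real.rpow_one]
  -- continuity
  have hScont : ContinuousOn S (Set.Ici t₀) := fun t ht =>
    ((hS t ht).continuousAt).continuousWithinAt
  have hIcont : ContinuousOn I (Set.Ici t₀) := fun t ht =>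
    ((hI t ht).continuousAt).continuousWithinAt
  -- S is antitone on [t₀, ∞)
  have hSanti : AntitoneOn S (Set.Ici t₀) := by
    apply antitoneOn_of_deriv_nonpos (convex_Ici t₀) hScont
    · intro x hx
      rw [interior_Ici] at hx
      exact ((hS x (le_of_lt hx)).differentiableAt).differentiableWithinAt
    · intro x hx
      rw [interior_Ici] at hx
      have hx' := le_of_lt (show t₀ < x from hx)
      rw [(hS x hx').deriv]
      have h1 := hαpos (I x)
      have h2 := (hIpos x hx').1
      have h3 := hSpos x hx'
      nlinarith [mul_pos (mul_pos h1 h2) h3]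
  have hSM : ∀ t ≥ t₀, S t ≤ M :=
    fun t ht => (hSanti Set.self_mem_Ici ht ht).trans (le_max_left _ _)
  -- I^(p+1) ≥ I on [t₀,∞)
  have hIp1 : ∀ t ≥ t₀, I t ≤ I t ^ (p + 1) := by
    intro t ht
    have h := Real.rpow_le_rpow_of_exponent_ge (hIpos t ht).1 (hIpos t ht).2
      (show p + 1 ≤ 1 by linarith)
    rwa [Real.rpow_one] at h
  -- local decrease from a negative derivative
  have hdec : ∀ u b d : ℝ, u < b → d < 0 → HasDerivAt I d u →
      ∃ s ∈ Set.Ioo u b, I s < I u := by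
    intro u b d hub hd hder
    have h1 : Filter.Tendsto (slope I u) (𝓝[≠] u) (𝓝 d) :=
      hasDerivAt_iff_tendsto_slope.1 hder
    have h2 : Filter.Tendsto (slope I u) (𝓝[>] u) (𝓝 d) :=
      h1.mono_left (nhdsWithin_mono _ (fun x hx => ne_of_gt hx))
    have h3 : ∀ᶠ s in 𝓝[>] u, slope I u s < 0 := h2.eventually_lt_const hd
    have h4 : ∀ᶠ s in 𝓝[>] u, s ∈ Set.Ioo u b :=
      Filter.eventually_of_mem (Ioo_mem_nhdsGT hub) (fun x hx => hx)
    obtain ⟨s, hs1, hs2⟩ := (h3.and h4).exists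
    refine ⟨s, hs2, ?_⟩
    rw [slope_def_field, div_lt_iff₀ (by linarith [hs2.1] : (0:ℝ) < s - u)] at hs1
    linarith
  -- negative derivative whenever 0 < I u ≤ ℓ
  have hneg : ∀ u ≥ t₀, I u ≤ ℓ →
      α (I u) * I u * S u - Cstar * I u ^ (p + 1) < 0 := by
    intro u hu hIu
    have hI0 := (hIpos u hu).1
    have hsplit : I u ^ (p + 1) = I u ^ p * I u := by
      rw [Real.rpow_add hI0, Real.rpow_one]
    have hpow : ℓ ^ p ≤ I u ^ p :=
      Real.antitoneOn_rpow_Ioi_of_exponent_nonpos hp.le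
        (Set.mem_Ioi.2 hI0) (Set.mem_Ioi.2 hℓpos) hIu
    rw [hℓp] at hpow
    have hS1 := hSpos u hu
    have hS2 := hSM u hu
    have hα1 := hαpos (I u)
    have hα2 := hαle (I u)
    have key : Cstar * I u ^ (p + 1) ≥ 2 * m₁ * M * I u := by
      rw [hsplit]
      calc 2 * m₁ * M * I u = Cstar * (2 * m₁ * M / Cstar) * I u := by
            field_simp
        _ ≤ Cstar * I u ^ p * I u := by
            have : Cstar * (2 * m₁ * M / Cstar) ≤ Cstar * I u ^ p :=
              mul_le_mul_of_nonneg_left hpow hCpos.le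
            exact mul_le_mul_of_nonneg_right this hI0.le
        _ = Cstar * (I u ^ p * I u) := by ring
    nlinarith [mul_le_mul hα2 hS2 hS1.le hm1.le, mul_pos (mul_pos hm1 hMpos) hI0]
  -- there is a time where I goes below ℓ
  obtain ⟨τ, hτ₀, hτℓ⟩ : ∃ τ ≥ t₀, I τ ≤ ℓ := by
    by_contra hcon
    push_neg at hcon
    set g : ℝ → ℝ := fun t => S t + I t + Cstar * ℓ * t with hg
    have hgderiv : ∀ t ≥ t₀, HasDerivAt g
        (-(α (I t)) * I t * S t + (α (I t) * I t * S t - Cstar * I t ^ (p + 1))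
          + Cstar * ℓ) t := by
      intro t ht
      have h1 : HasDerivAt (fun x : ℝ => Cstar * ℓ * x) (Cstar * ℓ) t := by
        simpa using (hasDerivAt_id t).const_mul (Cstar * ℓ)
      exact ((hS t ht).add (hI t ht)).add h1
    have hganti : AntitoneOn g (Set.Ici t₀) := by
      apply antitoneOn_of_deriv_nonpos (convex_Ici t₀)
      · exact fun t ht => ((hgderiv t ht).continuousAt).continuousWithinAt
      · intro x hx
        rw [interior_Ici] at hx
        exact ((hgderiv x (le_of_lt hx)).differentiableAt).differentiableWithinAt
      · intro x hx
        rw [interior_Ici] at hx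
        have hx' := le_of_lt (show t₀ < x from hx)
        rw [(hgderiv x hx').deriv]
        have h1 : ℓ < I x := hcon x hx'
        have h2 := hIp1 x hx'
        have h3 : Cstar * ℓ ≤ Cstar * I x ^ (p + 1) :=
          mul_le_mul_of_nonneg_left (by linarith) hCpos.le
        linarith
    set T : ℝ := t₀ + (S t₀ + I t₀) / (Cstar * ℓ) with hT
    have hTpos : 0 < (S t₀ + I t₀) / (Cstar * ℓ) :=
      div_pos (by linarith [hSpos t₀ le_rfl, hIt₀.1]) (mul_pos hCpos hℓpos)
    have hT₀ : t₀ ≤ T := by rw [hT]; linarith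
    have := hganti Set.self_mem_Ici hT₀ hT₀
    have hexp : g T = S T + I T + Cstar * ℓ * T := rfl
    have hexp0 : g t₀ = S t₀ + I t₀ + Cstar * ℓ * t₀ := rfl
    have hmul : Cstar * ℓ * (T - t₀) = S t₀ + I t₀ := by
      rw [hT]
      field_simp
      ring
    have hSTpos := hSpos T hT₀
    have hITpos := (hIpos T hT₀).1
    rw [hexp, hexp0] at this
    nlinarith
  -- invariance: once below ℓ, stays below ℓ
  have hinv : ∀ t ≥ τ, I t ≤ ℓ := by
    intro t ht
    by_contra hcon
    push_neg at hcon
    have hτt : τ < t := by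
      rcases lt_or_eq_of_le ht with h | h
      · exact h
      · exfalso; rw [← h] at hcon; linarith
    set A : Set ℝ := Set.Icc τ t ∩ I ⁻¹' Set.Iic ℓ with hA
    have hsub : Set.Icc τ t ⊆ Set.Ici t₀ := fun x hx => le_trans hτ₀ hx.1
    have hAclosed : IsClosed A :=
      (hIcont.mono hsub).preimage_isClosed_of_isClosed isClosed_Icc isClosed_Iic
    have hAne : A.Nonempty := ⟨τ, ⟨le_rfl, hτt.le⟩, hτℓ⟩
    have hAbdd : BddAbove A := ⟨t, fun x hx => hx.1.2⟩
    set u : ℝ := sSup A with hu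
    have huA : u ∈ A := hAclosed.csSup_mem hAne hAbdd
    have huτ : τ ≤ u := huA.1.1
    have hut : u ≤ t := huA.1.2
    have hIu : I u ≤ ℓ := huA.2
    have hult : u < t := lt_of_le_of_ne hut (fun h => absurd (h ▸ hIu) (not_le.2 hcon))
    have hu₀ : t₀ ≤ u := le_trans hτ₀ huτ
    -- everything strictly after u up to t is above ℓ
    have habove : ∀ s ∈ Set.Ioc u t, ℓ < I s := by
      intro s hs
      by_contra h
      push_neg at h
      have hsA : s ∈ A := ⟨⟨le_trans huτ hs.1.le, hs.2⟩, h⟩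
      have := le_csSup hAbdd hsA
      rw [← hu] at this
      linarith [hs.1]
    have hd := hneg u hu₀ hIu
    obtain ⟨s, hs1, hs2⟩ := hdec u t _ hult hd (hI u hu₀)
    have := habove s ⟨hs1.1, hs1.2.le⟩
    linarith
  -- conclusion
  refine ⟨τ, hτ₀, fun t ht => ?_⟩
  have ht₀ : t₀ ≤ t := le_trans hτ₀ ht.le
  have hIt := hIpos t ht₀
  have hle : I t ≤ ℓ := hinv t ht.le
  have hpow : ℓ ^ p ≤ I t ^ p :=
    Real.antitoneOn_rpow_Ioi_of_exponent_nonpos hp.le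
      (Set.mem_Ioi.2 hIt.1) (Set.mem_Ioi.2 hℓpos) hle
  rw [hℓp] at hpow
  have hsplit : I t ^ (p + 1) = I t ^ p * I t := by
    rw [Real.rpow_add hIt.1, Real.rpow_one]
  rw [hsplit]
  calc I t = 1 * I t := (one_mul _).symm
    _ ≤ M * I t := mul_le_mul_of_nonneg_right hM1 hIt.1.le
    _ = Cstar / (2 * m₁) * (2 * m₁ * M / Cstar * I t) := by
        field_simp
    _ ≤ Cstar / (2 * m₁) * (I t ^ p * I t) := by
        apply mul_le_mul_of_nonneg_left _ (by positivity)
        exact mul_le_mul_of_nonneg_right hpow hIt.1.le
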